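/- For r even, the vertex set of the r-th power of a path on 2r vertices v_1,...,v_{2r} admits a partition into r/2+1 parts each inducing a forest, given explicitly by the parts {v_1,v_2,v_{r+2},v_{r+3}}, {v_3,v_4,v_{r+4},v_{r+5}}, ..., {v_{r−1},v_r,v_{2r}}, {v_{r+1}}. -/

import Mathlib

/-- The `r`-th power of a path on `ℓ` vertices: `v_i ~ v_j` iff `0 < |i - j| ≤ r`. -/
def pathPower (r ℓ : ℕ) : SimpleGraph (Fin ℓ) :=
  SimpleGraph.fromRel (fun i j => |(i : ℤ) - (j : ℤ)| ≤ r)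

/-- The explicit part assignment (for `r` even), using the 1-based index `i = v + 1`:
vertex `v_{r+1}` goes to the last part (index `r/2`), vertices `v_1,...,v_r` are grouped
in consecutive pairs `{v_{2j-1}, v_{2j}}` into part `j - 1`, and vertices
`v_{r+2},...,v_{2r}` are grouped in consecutive pairs `{v_{r+2j}, v_{r+2j+1}}` into part
`j - 1`; this realizes the parts `{v_1,v_2,v_{r+2},v_{r+3}}, {v_3,v_4,v_{r+4},v_{r+5}},
..., {v_{r-1},v_r,v_{2r}}, {v_{r+1}}`. -/
def evenPart (r : ℕ) (v : Fin (2 * r)) : ℕ :=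
  let i := v.val + 1
  if i = r + 1 then r / 2
  else if i ≤ r then (i - 1) / 2
  else (i - r - 2) / 2

open SimpleGraph

lemma no_cycle_at_max {V : Type*} {G : SimpleGraph V} (f : V → ℕ)
    (hinj : Function.Injective f)
    (hadj : ∀ u v, G.Adj u v → f u = f v + 1 ∨ f v = f u + 1)
    (m : V) (c : G.Walk m m) (hc : c.IsCycle)
    (hmax : ∀ a ∈ c.support, f a ≤ f m) : False := by
  have hlen := hc.three_le_length
  cases c with
  | nil => exact hc.ne_nil rfl
  | @cons _ x _ h p =>
    rw [Walk.cons_isCycle_iff] at hc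
    obtain ⟨hp, -⟩ := hc
    cases hq : p.reverse with
    | nil =>
      have := congrArg Walk.length hq
      simp at this
      simp [this.length_eq_zero] at hlen
    | @cons _ y _ h' q =>
      have hy : y ∈ p.support := by
        have : y ∈ p.reverse.support := by
          rw [hq]; simp [Walk.support_cons]
        rwa [Walk.support_reverse, List.mem_reverse] at this
      have hx : x ∈ p.support := Walk.start_mem_support p
      have hxc : f x ≤ f m := hmax x (by simp [Walk.support_cons, hx])
      have hyc : f y ≤ f m := hmax y (by simp [Walk.support_cons, hy])
      have h1 := hadj _ _ h
      have h2 := hadj _ _ h'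
      have hxy : x = y := hinj (by omega)
      subst hxy
      have hqp : q.IsPath := by
        have := hp.reverse
        rw [hq, Walk.cons_isPath_iff] at this
        exact this.1
      have : (⟨q, hqp⟩ : G.Path x x) = Path.nil := Path.loop_eq _
      have hq0 : q.length = 0 := by
        have := congrArg (fun p : G.Path x x => (p : G.Walk x x).length) this
        simpa using this
      have := congrArg Walk.length hq
      simp [hq0] at this
      simp [this] at hlen

lemma acyclic_of_step {V : Type*} {G : SimpleGraph V} (f : V → ℕ)
    (hinj : Function.Injective f)
    (hadj : ∀ u v, G.Adj u v → f u = f v + 1 ∨ f v = f u + 1) :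
    G.IsAcyclic := by
  classical
  intro v c hc
  obtain ⟨m, hm, hmax⟩ := Finset.exists_max_image c.support.toFinset f
    ⟨v, List.mem_toFinset.2 c.start_mem_support⟩
  rw [List.mem_toFinset] at hm
  have hmax' : ∀ a ∈ c.support, f a ≤ f m := fun a ha => hmax a (List.mem_toFinset.2 ha)
  refine no_cycle_at_max f hinj hadj m (c.rotate m hm) (hc.rotate hm) ?_
  intro a ha
  rw [Walk.support_eq_cons] at ha
  rcases List.mem_cons.mp ha with rfl | ha
  · exact le_refl _
  · exact hmax' a (List.mem_of_mem_tail (((Walk.support_rotate c m hm).mem_iff).mp ha))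


/-- For `r` even, the explicit partition into `r/2 + 1` parts is an acyclic partition of
the `r`-th power of the path on `2r` vertices: each part induces a forest. -/
theorem stmt2 (r : ℕ) (hr : 2 ≤ r) (hre : Even r) :
    (∀ v : Fin (2 * r), evenPart r v < r / 2 + 1) ∧
    (∀ t : ℕ, ((pathPower r (2 * r)).induce {v | evenPart r v = t}).IsAcyclic) := by
  obtain ⟨k, hk⟩ := hre
  constructor
  · intro v
    have := v.isLt
    simp only [evenPart]
    split_ifs <;> omega
  · intro t
    have hmem : ∀ v : Fin (2 * r), evenPart r v = t →
        (v.val = r ∧ 2 * t = r) ∨ (v.val < r ∧ (v.val = 2 * t ∨ v.val = 2 * t + 1)) ∨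
        (r < v.val ∧ (v.val = r + 2 * t + 1 ∨ v.val = r + 2 * t + 2)) := by
      intro v hv
      have := v.isLt
      simp only [evenPart] at hv
      split_ifs at hv <;> omega
    apply acyclic_of_step (fun v : {v : Fin (2*r) | evenPart r v = t} =>
      if (v : Fin (2*r)).val < r then (v : Fin (2*r)).val - 2 * t
      else (v : Fin (2*r)).val + 1 - r - 2 * t)
    · rintro ⟨a, ha⟩ ⟨b, hb⟩ hf
      have ha' := hmem a ha
      have hb' := hmem b hb
      simp only at hf
      have : a.val = b.val := by split_ifs at hf <;> omega
      exact Subtype.ext (Fin.ext this)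
    · rintro ⟨a, ha⟩ ⟨b, hb⟩ hadj
      have ha' := hmem a ha
      have hb' := hmem b hb
      have hadj' : a ≠ b ∧ (|(a : ℤ) - (b : ℤ)| ≤ r ∨ |(b : ℤ) - (a : ℤ)| ≤ r) := by
        simpa [pathPower, SimpleGraph.fromRel_adj] using hadj
      obtain ⟨hne, habs⟩ := hadj'
      have hne' : a.val ≠ b.val := fun h => hne (Fin.ext h)
      have hdist : a.val ≤ b.val + r ∧ b.val ≤ a.val + r := by
        rcases habs with h | h <;> rw [abs_sub_le_iff] at h <;>
          constructor <;> omega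
      simp only
      split_ifs <;> omega
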